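/- Fix μ ∈ (1,2). For every ε ∈ (0,1/2) there exists a function f = f_ε ∈ C²[ε,1] and positive constants c₁, c₂, c₃ depending only on μ (not on ε) such that: (1) f(z) ≥ 0 and f'(z) ≥ 0 on [ε,1]; (2) f(ε)=0, f(2ε) ≥ c₁, f(1)=1; (3) f(z) ≤ c₂ f'(z) z^{2-μ} and -f''(z) ≤ c₃ f'(z) z^{-μ} for all z ∈ [ε,1]. -/

import Mathlib

open Set

/-- Lemma 3.2: for fixed `μ ∈ (1,2)` there are positive constants `c₁, c₂, c₃` (independent of
`ε`) such that for every `ε ∈ (0,1/2)` there is `f ∈ C²[ε,1]` (encoded by derivative functions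
`f'`, `f''` with `f''` continuous on `[ε,1]`) with: `f ≥ 0`, `f' ≥ 0`; `f(ε) = 0`,
`f(2ε) ≥ c₁`, `f(1) = 1`; and `f(z) ≤ c₂ f'(z) z^{2-μ}`, `-f''(z) ≤ c₃ f'(z) z^{-μ}`
on `[ε,1]`. -/
theorem profile_exists (μ : ℝ) (hμ : μ ∈ Ioo (1:ℝ) 2) :
    ∃ c₁ : ℝ, 0 < c₁ ∧ ∃ c₂ : ℝ, 0 < c₂ ∧ ∃ c₃ : ℝ, 0 < c₃ ∧
    ∀ ε ∈ Ioo (0:ℝ) (1/2),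
    ∃ f f' f'' : ℝ → ℝ,
      (∀ z ∈ Icc ε 1, HasDerivWithinAt f (f' z) (Icc ε 1) z) ∧
      (∀ z ∈ Icc ε 1, HasDerivWithinAt f' (f'' z) (Icc ε 1) z) ∧
      ContinuousOn f'' (Icc ε 1) ∧
      (∀ z ∈ Icc ε 1, 0 ≤ f z ∧ 0 ≤ f' z) ∧
      f ε = 0 ∧ c₁ ≤ f (2*ε) ∧ f 1 = 1 ∧
      (∀ z ∈ Icc ε 1,
        f z ≤ c₂ * f' z * z ^ (2 - μ) ∧ -(f'' z) ≤ c₃ * f' z * z ^ (-μ)) := by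
  obtain ⟨hμ1, hμ2⟩ := hμ
  have hμ1' : (0:ℝ) < μ - 1 := by linarith
  have hμ0 : (0:ℝ) < μ := by linarith
  refine ⟨(μ-1)/(2*μ), div_pos hμ1' (by linarith), μ/(μ-1), div_pos hμ0 hμ1',
    2, by norm_num, ?_⟩
  rintro ε ⟨hε0, hε2⟩
  have hε1 : ε < 1 := by linarith
  have hεpow : ε ^ (μ-1) < 1 := Real.rpow_lt_one hε0.le hε1 hμ1'
  have hεpow0 : 0 ≤ ε ^ (μ-1) := Real.rpow_nonneg hε0.le _
  set G : ℝ := (1 - ε ^ (μ-1))/(μ-1) + 1 - ε with hGdef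
  have hG : 0 < G := by
    have h1 : 0 < (1 - ε ^ (μ-1))/(μ-1) := div_pos (by linarith) hμ1'
    rw [hGdef]; linarith
  have h5 : μ/(μ-1) = 1/(μ-1) + 1 := by field_simp; ring
  have hGle : G ≤ μ/(μ-1) := by
    have h4 : (1 - ε ^ (μ-1))/(μ-1) ≤ 1/(μ-1) :=
      (div_le_div_iff_of_pos_right hμ1').mpr (by linarith)
    rw [hGdef, h5]; linarith
  refine ⟨fun z => ((z ^ (μ-1) - ε ^ (μ-1))/(μ-1) + 1 - ε * z ^ (-1:ℝ))/G,
          fun z => (z ^ (μ-2) + ε * z ^ (-2:ℝ))/G,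
          fun z => ((μ-2) * z ^ (μ-3) - 2 * ε * z ^ (-3:ℝ))/G,
          ?_, ?_, ?_, ?_, ?_, ?_, ?_, ?_⟩
  · -- first derivative
    intro z hz
    have hz0 : 0 < z := lt_of_lt_of_le hε0 hz.1
    have h1 : HasDerivAt (fun z : ℝ => z ^ (μ-1)) ((μ-1) * z ^ (μ-1-1)) z :=
      Real.hasDerivAt_rpow_const (Or.inl hz0.ne')
    have h2 : HasDerivAt (fun z : ℝ => z ^ (-1:ℝ)) ((-1) * z ^ ((-1:ℝ)-1)) z :=
      Real.hasDerivAt_rpow_const (Or.inl hz0.ne')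
    have e1 : μ - 1 - 1 = μ - 2 := by ring
    have e2 : (-1:ℝ) - 1 = -2 := by norm_num
    rw [e1] at h1; rw [e2] at h2
    have hg := (((h1.sub_const (ε ^ (μ-1))).div_const (μ-1)).add_const 1).sub
      (h2.const_mul ε)
    have e3 : (μ-1) * z ^ (μ-2) / (μ-1) - ε * (-1 * z ^ (-2:ℝ))
        = z ^ (μ-2) + ε * z ^ (-2:ℝ) := by
      field_simp
      ring
    rw [e3] at hg
    exact (hg.div_const G).hasDerivWithinAt
  · -- second derivative
    intro z hz
    have hz0 : 0 < z := lt_of_lt_of_le hε0 hz.1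
    have h1 : HasDerivAt (fun z : ℝ => z ^ (μ-2)) ((μ-2) * z ^ (μ-2-1)) z :=
      Real.hasDerivAt_rpow_const (Or.inl hz0.ne')
    have h2 : HasDerivAt (fun z : ℝ => z ^ (-2:ℝ)) ((-2) * z ^ ((-2:ℝ)-1)) z :=
      Real.hasDerivAt_rpow_const (Or.inl hz0.ne')
    have e1 : μ - 2 - 1 = μ - 3 := by ring
    have e2 : (-2:ℝ) - 1 = -3 := by norm_num
    rw [e1] at h1; rw [e2] at h2
    have hg := h1.add (h2.const_mul ε)
    have e3 : (μ-2) * z ^ (μ-3) + ε * (-2 * z ^ (-3:ℝ))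
        = (μ-2) * z ^ (μ-3) - 2 * ε * z ^ (-3:ℝ) := by ring
    rw [e3] at hg
    exact (hg.div_const G).hasDerivWithinAt
  · -- continuity of f''
    have hc : ∀ p : ℝ, ContinuousOn (fun z : ℝ => z ^ p) (Icc ε 1) := fun p z hz =>
      (Real.continuousAt_rpow_const z p
        (Or.inl (lt_of_lt_of_le hε0 hz.1).ne')).continuousWithinAt
    exact ((continuousOn_const.mul (hc (μ-3))).sub
      (continuousOn_const.mul (hc (-3)))).div_const G
  · -- nonnegativity
    intro z hz
    have hz0 : 0 < z := lt_of_lt_of_le hε0 hz.1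
    have hzε : ε ^ (μ-1) ≤ z ^ (μ-1) := Real.rpow_le_rpow hε0.le hz.1 hμ1'.le
    constructor
    · apply div_nonneg _ hG.le
      have h2 : ε * z ^ (-1:ℝ) ≤ 1 := by
        rw [Real.rpow_neg_one, ← div_eq_mul_inv, div_le_one hz0]
        exact hz.1
      have h1 : 0 ≤ (z ^ (μ-1) - ε ^ (μ-1))/(μ-1) := div_nonneg (by linarith) hμ1'.le
      linarith
    · apply div_nonneg _ hG.le
      have h1 : 0 ≤ z ^ (μ-2) := Real.rpow_nonneg hz0.le _
      have h2 : 0 ≤ ε * z ^ (-2:ℝ) := mul_nonneg hε0.le (Real.rpow_nonneg hz0.le _)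
      linarith
  · -- f ε = 0
    show ((ε ^ (μ-1) - ε ^ (μ-1))/(μ-1) + 1 - ε * ε ^ (-1:ℝ))/G = 0
    rw [Real.rpow_neg_one, mul_inv_cancel₀ hε0.ne']
    simp
  · -- c₁ ≤ f (2ε)
    have h2ε : (0:ℝ) < 2*ε := by linarith
    have h1 : ε ^ (μ-1) ≤ (2*ε) ^ (μ-1) :=
      Real.rpow_le_rpow hε0.le (by linarith) hμ1'.le
    have h2 : ε * (2*ε) ^ (-1:ℝ) = 1/2 := by
      rw [Real.rpow_neg_one]
      field_simp
    have hnum : 1/2 ≤ ((2*ε) ^ (μ-1) - ε ^ (μ-1))/(μ-1) + 1 - ε * (2*ε) ^ (-1:ℝ) := by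
      have : 0 ≤ ((2*ε) ^ (μ-1) - ε ^ (μ-1))/(μ-1) := div_nonneg (by linarith) hμ1'.le
      rw [h2]; linarith
    calc (μ-1)/(2*μ) = (1/2)/(μ/(μ-1)) := by
          rw [div_div_div_eq]
          rw [eq_div_iff (by positivity)]
          field_simp
      _ ≤ (((2*ε) ^ (μ-1) - ε ^ (μ-1))/(μ-1) + 1 - ε * (2*ε) ^ (-1:ℝ))/G :=
          div_le_div₀ (by linarith) hnum hG hGle
  · -- f 1 = 1
    have hG' : G ≠ 0 := hG.ne'
    show (((1:ℝ) ^ (μ-1) - ε ^ (μ-1))/(μ-1) + 1 - ε * (1:ℝ) ^ (-1:ℝ))/G = 1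
    rw [Real.one_rpow, Real.one_rpow, mul_one]
    rw [hGdef] at hG' ⊢
    exact div_self hG'
  · -- the two inequalities
    intro z hz
    have hz0 : 0 < z := lt_of_lt_of_le hε0 hz.1
    have hz1 : z ≤ 1 := hz.2
    have hzpow1 : z ^ (μ-1) ≤ 1 := Real.rpow_le_one hz0.le hz1 hμ1'.le
    constructor
    · -- f ≤ c₂ f' z^(2-μ)
      have hA : (z ^ (μ-1) - ε ^ (μ-1))/(μ-1) + 1 - ε * z ^ (-1:ℝ) ≤ μ/(μ-1) := by
        have h3 : 0 ≤ ε * z ^ (-1:ℝ) := mul_nonneg hε0.le (Real.rpow_nonneg hz0.le _)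
        have h4 : (z ^ (μ-1) - ε ^ (μ-1))/(μ-1) ≤ 1/(μ-1) :=
          (div_le_div_iff_of_pos_right hμ1').mpr (by linarith)
        rw [h5]; linarith
      have hB : 1 ≤ (z ^ (μ-2) + ε * z ^ (-2:ℝ)) * z ^ (2-μ) := by
        have h1 : z ^ (μ-2) * z ^ (2-μ) = 1 := by
          rw [← Real.rpow_add hz0]; norm_num
        have h2 : 0 ≤ ε * z ^ (-2:ℝ) * z ^ (2-μ) :=
          mul_nonneg (mul_nonneg hε0.le (Real.rpow_nonneg hz0.le _))
            (Real.rpow_nonneg hz0.le _)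
        nlinarith
      have key : (z ^ (μ-1) - ε ^ (μ-1))/(μ-1) + 1 - ε * z ^ (-1:ℝ)
          ≤ μ/(μ-1) * (z ^ (μ-2) + ε * z ^ (-2:ℝ)) * z ^ (2-μ) := by
        have hc2 : 0 < μ/(μ-1) := div_pos hμ0 hμ1'
        calc (z ^ (μ-1) - ε ^ (μ-1))/(μ-1) + 1 - ε * z ^ (-1:ℝ) ≤ μ/(μ-1) := hA
          _ = μ/(μ-1) * 1 := (mul_one _).symm
          _ ≤ μ/(μ-1) * ((z ^ (μ-2) + ε * z ^ (-2:ℝ)) * z ^ (2-μ)) :=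
              mul_le_mul_of_nonneg_left hB hc2.le
          _ = μ/(μ-1) * (z ^ (μ-2) + ε * z ^ (-2:ℝ)) * z ^ (2-μ) := by ring
      have h6 : μ/(μ-1) * ((z ^ (μ-2) + ε * z ^ (-2:ℝ))/G) * z ^ (2-μ)
          = (μ/(μ-1) * (z ^ (μ-2) + ε * z ^ (-2:ℝ)) * z ^ (2-μ))/G := by ring
      rw [h6]
      exact (div_le_div_iff_of_pos_right hG).mpr key
    · -- -f'' ≤ 2 f' z^(-μ)
      have ha : z ^ (μ-3) ≤ z ^ (-2:ℝ) :=
        Real.rpow_le_rpow_of_exponent_ge hz0 hz1 (by linarith)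
      have hb : z ^ (-3:ℝ) ≤ z ^ (-2-μ) :=
        Real.rpow_le_rpow_of_exponent_ge hz0 hz1 (by linarith)
      have hap : 0 ≤ z ^ (μ-3) := Real.rpow_nonneg hz0.le _
      have e1 : z ^ (μ-2) * z ^ (-μ) = z ^ (-2:ℝ) := by
        rw [← Real.rpow_add hz0, show μ - 2 + -μ = (-2:ℝ) from by ring]
      have e2 : z ^ (-2:ℝ) * z ^ (-μ) = z ^ (-2-μ) := by
        rw [← Real.rpow_add hz0, show (-2:ℝ) + -μ = -2 - μ from by ring]
      have key : -((μ-2) * z ^ (μ-3) - 2 * ε * z ^ (-3:ℝ))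
          ≤ 2 * (z ^ (μ-2) + ε * z ^ (-2:ℝ)) * z ^ (-μ) := by
        have h1 : (2-μ) * z ^ (μ-3) ≤ 2 * z ^ (-2:ℝ) := by nlinarith
        have h2 : 2 * ε * z ^ (-3:ℝ) ≤ 2 * ε * z ^ (-2-μ) := by
          apply mul_le_mul_of_nonneg_left hb (by linarith)
        have h3 : 2 * (z ^ (μ-2) + ε * z ^ (-2:ℝ)) * z ^ (-μ)
            = 2 * z ^ (-2:ℝ) + 2 * ε * z ^ (-2-μ) := by
          rw [mul_comm (2 * (z ^ (μ-2) + ε * z ^ (-2:ℝ))) (z ^ (-μ))]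
          rw [mul_add (2:ℝ)]
          rw [mul_add (z ^ (-μ))]
          rw [show z ^ (-μ) * (2 * z ^ (μ-2)) = 2 * (z ^ (μ-2) * z ^ (-μ)) by ring,
              e1,
              show z ^ (-μ) * (2 * (ε * z ^ (-2:ℝ))) = 2 * ε * (z ^ (-2:ℝ) * z ^ (-μ)) by ring,
              e2]
        rw [h3]; linarith
      have h6 : (2:ℝ) * ((z ^ (μ-2) + ε * z ^ (-2:ℝ))/G) * z ^ (-μ)
          = (2 * (z ^ (μ-2) + ε * z ^ (-2:ℝ)) * z ^ (-μ))/G := by ring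
      rw [h6, ← neg_div]
      exact (div_le_div_iff_of_pos_right hG).mpr key
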